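/- arXiv:0807.1228 — 2 statements merged into one kernel-verified Lean document; each statement's English description precedes it below -/
import Mathlib

section
/- Let (M, d) be a metric space, let R > 0 and Δ > 0, and let (x_j, y_j)_{j ∈ J} be a finite family of transmitter–receiver pairs in M such that d(x_j, y_j) ≤ R for every j ∈ J, and d(x_k, y_j) ≥ (1 + Δ) * R for every pair of distinct indices k ≠ j in J. Then for every pair of distinct indices j ≠ k in J, the receivers satisfy d(y_j, y_k) ≥ Δ * R. -/
/-- Protocol model receiver separation: in a metric space, if `(x j, y j)_{j ∈ J}` is a
finite family of transmitter–receiver pairs with `dist (x j) (y j) ≤ R` for every `j`, and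
`dist (x k) (y j) ≥ (1 + Δ) * R` for all distinct `k ≠ j`, then any two distinct receivers
satisfy `dist (y j) (y k) ≥ Δ * R`. -/
theorem stmt9 {M : Type*} [MetricSpace M] (R Δ : ℝ) (hR : 0 < R) (hΔ : 0 < Δ)
    {J : Type*} [Fintype J] (x y : J → M)
    (h1 : ∀ j : J, dist (x j) (y j) ≤ R)
    (h2 : ∀ k j : J, k ≠ j → (1 + Δ) * R ≤ dist (x k) (y j)) :
    ∀ j k : J, j ≠ k → Δ * R ≤ dist (y j) (y k) := by
  intro j k hjk
  have h := h2 k j (Ne.symm hjk)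
  have htri : dist (x k) (y j) ≤ dist (x k) (y k) + dist (y k) (y j) :=
    dist_triangle _ _ _
  have := h1 k
  have hd : dist (y k) (y j) = dist (y j) (y k) := dist_comm _ _
  nlinarith
end

section
/- Let n > 0, R > 0 and Δ > 0, and let (x_j, y_j)_{j ∈ J} be a finite family of transmitter–receiver pairs of points in the square [0, √n]² ⊂ ℝ² such that ‖x_j − y_j‖ ≤ R for every j ∈ J and ‖x_k − y_j‖ ≥ (1 + Δ) * R for all distinct k ≠ j in J. Then the number of pairs satisfies |J| ≤ 4 * (√n + Δ*R)² / (π * Δ² * R²). In particular, if Δ*R ≤ √n then |J| ≤ 16 * n / (π * Δ² * R²). -/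
open scoped Real ENNReal
open MeasureTheory Metric

open MeasureTheory Metric in
private lemma stmt11_coord_le_dist (z w : EuclideanSpace ℝ (Fin 2)) (i : Fin 2) :
    dist (z i) (w i) ≤ dist z w := by
  rw [EuclideanSpace.dist_eq]
  have h1 : dist (z i) (w i) = Real.sqrt (dist (z i) (w i) ^ 2) := by
    rw [Real.sqrt_sq dist_nonneg]
  rw [h1]
  apply Real.sqrt_le_sqrt
  exact Finset.single_le_sum (f := fun j => dist (z j) (w j) ^ 2)
    (fun j _ => sq_nonneg _) (Finset.mem_univ i)

open MeasureTheory Metric in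
private lemma stmt11_box_volume (a b : ℝ) :
    volume {z : EuclideanSpace ℝ (Fin 2) | ∀ i, z i ∈ Set.Icc a b}
      = ENNReal.ofReal (b - a) ^ 2 := by
  have hset : {z : EuclideanSpace ℝ (Fin 2) | ∀ i, z i ∈ Set.Icc a b}
      = (MeasurableEquiv.toLp 2 (Fin 2 → ℝ)).symm ⁻¹' (Set.univ.pi fun _ => Set.Icc a b) := by
    ext z
    simp only [Set.mem_preimage, Set.mem_pi, Set.mem_univ, forall_true_left, Set.mem_setOf_eq]
    rfl
  rw [hset, (EuclideanSpace.volume_preserving_symm_measurableEquiv_toLp (Fin 2)).measure_preimage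
    ((MeasurableSet.univ_pi fun _ => measurableSet_Icc).nullMeasurableSet)]
  rw [volume_pi_pi]
  simp [Real.volume_Icc, sq]

open MeasureTheory Metric in
private lemma stmt11_ball_volume (c : EuclideanSpace ℝ (Fin 2)) (r : ℝ) :
    volume (ball c r) = ENNReal.ofReal r ^ 2 * ENNReal.ofReal π := by
  rw [EuclideanSpace.volume_ball]
  norm_num [Real.Gamma_two, Real.sq_sqrt Real.pi_pos.le]

/-- Throughput bound under the protocol model: if `(x j, y j)_{j ∈ J}` is a finite family of
transmitter–receiver pairs of points of the square `[0, √n]² ⊂ ℝ²` (Euclidean metric) with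
`dist (x j) (y j) ≤ R` and `dist (x k) (y j) ≥ (1 + Δ) * R` for all distinct
`k ≠ j`, then `|J| ≤ 4 * (√n + Δ*R)² / (π * Δ² * R²)`; in particular, if `Δ*R ≤ √n` then
`|J| ≤ 16 * n / (π * Δ² * R²)`. -/
theorem stmt11 (n R Δ : ℝ) (hn : 0 < n) (hR : 0 < R) (hΔ : 0 < Δ)
    {J : Type*} [Fintype J] (x y : J → EuclideanSpace ℝ (Fin 2))
    (hx : ∀ j : J, ∀ i : Fin 2, x j i ∈ Set.Icc (0 : ℝ) (Real.sqrt n))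
    (hy : ∀ j : J, ∀ i : Fin 2, y j i ∈ Set.Icc (0 : ℝ) (Real.sqrt n))
    (h1 : ∀ j : J, dist (x j) (y j) ≤ R)
    (h2 : ∀ k j : J, k ≠ j → (1 + Δ) * R ≤ dist (x k) (y j)) :
    (Fintype.card J : ℝ) ≤ 4 * (Real.sqrt n + Δ * R) ^ 2 / (π * Δ ^ 2 * R ^ 2) ∧
    (Δ * R ≤ Real.sqrt n →
      (Fintype.card J : ℝ) ≤ 16 * n / (π * Δ ^ 2 * R ^ 2)) := by
  classical
  -- the half-separation radius
  set r : ℝ := Δ * R / 2 with hr_def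
  have hr : 0 < r := by positivity
  -- receivers are pairwise at distance ≥ 2r
  have hsep : ∀ k j : J, k ≠ j → 2 * r ≤ dist (y k) (y j) := by
    intro k j hkj
    have h3 := h2 k j hkj
    have h4 := h1 k
    have htri : dist (x k) (y j) ≤ dist (x k) (y k) + dist (y k) (y j) := dist_triangle _ _ _
    have : dist (x k) (y j) - dist (x k) (y k) ≤ dist (y k) (y j) := by linarith
    calc 2 * r = (1 + Δ) * R - R := by ring
      _ ≤ dist (x k) (y j) - dist (x k) (y k) := by
          have := h1 k; rw [dist_comm (x k) (y k)] at this ⊢; linarith [h2 k j hkj]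
      _ ≤ dist (y k) (y j) := by
          have := dist_triangle (x k) (y k) (y j); linarith
  -- the balls are disjoint
  have hdisj : Set.PairwiseDisjoint (Finset.univ : Finset J)
      (fun j => ball (y j) r) := by
    intro k _ j _ hkj
    apply ball_disjoint_ball
    calc r + r = 2 * r := by ring
      _ ≤ dist (y k) (y j) := hsep k j hkj
  -- the balls are contained in the enlarged box
  set S : Set (EuclideanSpace ℝ (Fin 2)) :=
    {z | ∀ i, z i ∈ Set.Icc (-r) (Real.sqrt n + r)} with hS_def
  have hsub : (⋃ j ∈ (Finset.univ : Finset J), ball (y j) r) ⊆ S := by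
    intro z hz
    simp only [Finset.mem_univ, Set.iUnion_true, Set.mem_iUnion] at hz
    obtain ⟨j, hj⟩ := hz
    intro i
    have hd : dist (z i) (y j i) ≤ r := (stmt11_coord_le_dist z (y j) i).trans (mem_ball.mp hj).le
    have habs : |z i - y j i| ≤ r := by rwa [Real.dist_eq] at hd
    have h5 := (hy j i).1
    have h6 := (hy j i).2
    rw [abs_le] at habs
    constructor <;> [linarith [habs.1]; linarith [habs.2]]
  -- volume comparison
  have hvol : (Fintype.card J : ℝ≥0∞) * (ENNReal.ofReal r ^ 2 * ENNReal.ofReal π)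
      ≤ ENNReal.ofReal (Real.sqrt n + 2 * r) ^ 2 := by
    have hm : volume (⋃ j ∈ (Finset.univ : Finset J), ball (y j) r)
        = ∑ j : J, volume (ball (y j) r) :=
      measure_biUnion_finset hdisj (fun j _ => measurableSet_ball)
    have hS : volume S = ENNReal.ofReal (Real.sqrt n + 2 * r) ^ 2 := by
      rw [hS_def, stmt11_box_volume]
      congr 1
      ring_nf
    calc (Fintype.card J : ℝ≥0∞) * (ENNReal.ofReal r ^ 2 * ENNReal.ofReal π)
        = ∑ j : J, volume (ball (y j) r) := by
          simp [stmt11_ball_volume, Finset.sum_const, mul_comm]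
      _ = volume (⋃ j ∈ (Finset.univ : Finset J), ball (y j) r) := hm.symm
      _ ≤ volume S := measure_mono hsub
      _ = _ := hS
  -- convert to a real inequality
  have hreal : (Fintype.card J : ℝ) * (r ^ 2 * π) ≤ (Real.sqrt n + 2 * r) ^ 2 := by
    have hL : (Fintype.card J : ℝ≥0∞) * (ENNReal.ofReal r ^ 2 * ENNReal.ofReal π)
        = ENNReal.ofReal ((Fintype.card J : ℝ) * (r ^ 2 * π)) := by
      rw [ENNReal.ofReal_mul (by positivity), ENNReal.ofReal_mul (by positivity),
        ENNReal.ofReal_pow hr.le, ENNReal.ofReal_natCast]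
    have hRt : ENNReal.ofReal (Real.sqrt n + 2 * r) ^ 2
        = ENNReal.ofReal ((Real.sqrt n + 2 * r) ^ 2) := by
      rw [ENNReal.ofReal_pow (by positivity)]
    rw [hL, hRt] at hvol
    exact (ENNReal.ofReal_le_ofReal_iff (by positivity)).mp hvol
  have hπ : (0 : ℝ) < π := Real.pi_pos
  have hkey : (Fintype.card J : ℝ) * (π * Δ ^ 2 * R ^ 2) ≤ 4 * (Real.sqrt n + Δ * R) ^ 2 := by
    have h2r : Real.sqrt n + 2 * r = Real.sqrt n + Δ * R := by rw [hr_def]; ring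
    rw [h2r] at hreal
    have hr2 : r ^ 2 = Δ ^ 2 * R ^ 2 / 4 := by rw [hr_def]; ring
    have heq : (Fintype.card J : ℝ) * (π * Δ ^ 2 * R ^ 2)
        = 4 * ((Fintype.card J : ℝ) * (r ^ 2 * π)) := by rw [hr2]; ring
    linarith
  have hpos : (0 : ℝ) < π * Δ ^ 2 * R ^ 2 := by positivity
  constructor
  · rw [le_div_iff₀ hpos]
    exact hkey
  · intro h
    rw [le_div_iff₀ hpos]
    have hsq : (Real.sqrt n + Δ * R) ^ 2 ≤ 4 * n := by
      have h7 : Real.sqrt n + Δ * R ≤ 2 * Real.sqrt n := by linarith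
      have h8 : (0 : ℝ) ≤ Real.sqrt n + Δ * R := by positivity
      nlinarith [Real.sq_sqrt hn.le]
    nlinarith [hkey]
end
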